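/- Let k ≥ 1, let G be a finite simple graph, let u be a vertex of G, let S be a subset of the neighbors of u, let m ≥ 1, and let p be a function from S to {1,…,m}. Let G'' be the simple graph whose vertex set is the disjoint union of V(G), a set {r₁,…,r_m} of m new vertices, and a set C of k−1 new vertices, with the following edges and no others: all edges of G except the edges from u to the vertices of S; for each s ∈ S, an edge between s and r_{p(s)}; the vertices of C are pairwise adjacent (C is a clique of size k−1); and every vertex of C is adjacent to u and to each of r₁,…,r_m. Then G is k-colorable if and only if G'' is k-colorable. -/

import Mathlib

/-- The graph `G''` obtained from `G` as follows: the edges from `u` to the vertices of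
`S` are deleted; each `s ∈ S` is instead attached to the new vertex `r_{p(s)}` among `m`
new vertices `r₁, …, r_m`; and a new clique `C` of `k - 1` pairwise adjacent vertices is
added, each of whose vertices is adjacent to `u` and to each of `r₁, …, r_m`. -/
def reattachGadget {V : Type*} (G : SimpleGraph V) (u : V) (S : Set V)
    (k m : ℕ) (p : S → Fin m) : SimpleGraph (V ⊕ (Fin m ⊕ Fin (k - 1))) where
  Adj x y :=
    match x, y with
    | Sum.inl a, Sum.inl b =>
        G.Adj a b ∧ ¬((a = u ∧ b ∈ S) ∨ (b = u ∧ a ∈ S))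
    | Sum.inl a, Sum.inr (Sum.inl r) => ∃ h : a ∈ S, p ⟨a, h⟩ = r
    | Sum.inr (Sum.inl r), Sum.inl a => ∃ h : a ∈ S, p ⟨a, h⟩ = r
    | Sum.inl a, Sum.inr (Sum.inr _) => a = u
    | Sum.inr (Sum.inr _), Sum.inl a => a = u
    | Sum.inr (Sum.inl _), Sum.inr (Sum.inl _) => False
    | Sum.inr (Sum.inl _), Sum.inr (Sum.inr _) => True
    | Sum.inr (Sum.inr _), Sum.inr (Sum.inl _) => True
    | Sum.inr (Sum.inr c₁), Sum.inr (Sum.inr c₂) => c₁ ≠ c₂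
  symm := by
    constructor
    rintro (a | (r | c₁)) (b | (r' | c₂)) h
    · exact ⟨h.1.symm, fun h' => h.2 h'.symm⟩
    · exact h
    · exact h
    · exact h
    · exact h.elim
    · trivial
    · exact h
    · trivial
    · exact Ne.symm h
  loopless := by
    constructor
    rintro (a | (r | c₁)) h
    · exact G.irrefl h.1
    · exact h
    · exact h rfl


lemma aux_eq_of_avoid {n : ℕ} (g : Fin n → Fin (n+1)) (hg : Function.Injective g)
    (a b : Fin (n+1)) (ha : ∀ j, a ≠ g j) (hb : ∀ j, b ≠ g j) : a = b := by
  classical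
  have hT : (Finset.univ.image g).card = n := by
    rw [Finset.card_image_of_injective _ hg, Finset.card_univ, Fintype.card_fin]
  have hc : (Finset.univ.image g)ᶜ.card = 1 := by
    rw [Finset.card_compl, hT, Fintype.card_fin]; omega
  have ha' : a ∈ (Finset.univ.image g)ᶜ := by
    simp only [Finset.mem_compl, Finset.mem_image, not_exists]
    rintro j ⟨_, he⟩; exact ha j he.symm
  have hb' : b ∈ (Finset.univ.image g)ᶜ := by
    simp only [Finset.mem_compl, Finset.mem_image, not_exists]
    rintro j ⟨_, he⟩; exact hb j he.symm
  exact Finset.card_le_one.mp (le_of_eq hc) a ha' b hb'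

/-- Let `k ≥ 1`, let `G` be a finite simple graph, let `u` be a vertex, `S` a subset of
the neighbors of `u`, `m ≥ 1`, and `p : S → {1, …, m}`. Then `G` is `k`-colorable if and
only if `G''` is `k`-colorable. -/
theorem colorable_iff_reattachGadget_colorable {V : Type*} [Fintype V]
    (k : ℕ) (hk : 1 ≤ k) (G : SimpleGraph V) (u : V) (S : Set V)
    (hS : ∀ s ∈ S, G.Adj u s) (m : ℕ) (hm : 1 ≤ m) (p : S → Fin m) :
    G.Colorable k ↔ (reattachGadget G u S k m p).Colorable k := by
  obtain ⟨n, rfl⟩ : ∃ n, k = n + 1 := ⟨k - 1, by omega⟩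
  constructor
  · rintro ⟨c⟩
    refine ⟨SimpleGraph.Coloring.mk (fun x => match x with
      | Sum.inl a => c a
      | Sum.inr (Sum.inl _) => c u
      | Sum.inr (Sum.inr j) => (c u).succAbove j) ?_⟩
    rintro (a | (r | j)) (b | (r' | j')) h
    · exact c.valid h.1
    · obtain ⟨hs, -⟩ := h
      exact fun he => (c.valid (hS a hs)) he.symm
    · obtain rfl := h
      exact (Fin.succAbove_ne _ j').symm
    · obtain ⟨hs, -⟩ := h
      exact (c.valid (hS b hs))
    · exact h.elim
    · exact (Fin.succAbove_ne _ j').symm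
    · obtain rfl := h
      exact Fin.succAbove_ne _ j
    · exact Fin.succAbove_ne _ j
    · exact fun he => h (Fin.succAbove_right_injective he)
  · rintro ⟨f⟩
    set g : Fin n → Fin (n+1) := fun j => f (Sum.inr (Sum.inr j)) with hgdef
    have hg : Function.Injective g := by
      intro j j' he
      by_contra hne
      exact f.valid (show (reattachGadget G u S (n+1) m p).Adj
        (Sum.inr (Sum.inr j)) (Sum.inr (Sum.inr j')) from hne) he
    have hu : ∀ j, f (Sum.inl u) ≠ g j := fun j =>
      f.valid (show (reattachGadget G u S (n+1) m p).Adj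
        (Sum.inl u) (Sum.inr (Sum.inr j)) from rfl)
    have hr : ∀ r j, f (Sum.inr (Sum.inl r)) ≠ g j := fun r j =>
      f.valid (show (reattachGadget G u S (n+1) m p).Adj
        (Sum.inr (Sum.inl r)) (Sum.inr (Sum.inr j)) from trivial)
    have heq : ∀ r, f (Sum.inr (Sum.inl r)) = f (Sum.inl u) := fun r =>
      aux_eq_of_avoid g hg _ _ (hr r) hu
    refine ⟨SimpleGraph.Coloring.mk (fun a => f (Sum.inl a)) ?_⟩
    intro a b hab
    by_cases hcase : (a = u ∧ b ∈ S) ∨ (b = u ∧ a ∈ S)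
    · rcases hcase with ⟨h1, hb⟩ | ⟨h1, ha⟩ <;> rw [h1]
      · have h1 : f (Sum.inl b) ≠ f (Sum.inr (Sum.inl (p ⟨b, hb⟩))) :=
          f.valid (show (reattachGadget G u S (n+1) m p).Adj
            (Sum.inl b) (Sum.inr (Sum.inl (p ⟨b, hb⟩))) from ⟨hb, rfl⟩)
        rw [heq] at h1
        exact fun he => h1 he.symm
      · have h1 : f (Sum.inl a) ≠ f (Sum.inr (Sum.inl (p ⟨a, ha⟩))) :=
          f.valid (show (reattachGadget G u S (n+1) m p).Adj
            (Sum.inl a) (Sum.inr (Sum.inl (p ⟨a, ha⟩))) from ⟨ha, rfl⟩)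
        rw [heq] at h1
        exact h1
    · exact f.valid (show (reattachGadget G u S (n+1) m p).Adj
        (Sum.inl a) (Sum.inl b) from ⟨hab, hcase⟩)
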